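/- For real matrices E, R symmetric positive semidefinite and J skew-symmetric, the pencil λE - (J - R) is singular (det(λE - J + R) = 0 for all λ ∈ ℂ) if and only if ker J ∩ ker E ∩ ker R ≠ {0}. -/

import Mathlib

open Matrix

/-- A dH pencil `λ E - (J - R)` is singular (its determinant vanishes identically)
iff the kernels of `J`, `E` and `R` have a nontrivial common intersection. -/
theorem dH_pencil_singular_iff_common_kernel {n : ℕ}
    (E R J : Matrix (Fin n) (Fin n) ℝ)
    (hE : E.PosSemidef) (hR : R.PosSemidef) (hJ : Jᵀ = -J) :
    (∀ lam : ℂ,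
      (lam • E.map (fun r => (r : ℂ)) - J.map (fun r => (r : ℂ))
        + R.map (fun r => (r : ℂ))).det = 0)
    ↔ ∃ x : Fin n → ℝ, x ≠ 0 ∧ J.mulVec x = 0 ∧ E.mulVec x = 0 ∧ R.mulVec x = 0 := by
  have hmap : ∀ (M : Matrix (Fin n) (Fin n) ℝ) (y : Fin n → ℝ),
      (M.map (fun r => (r : ℂ))) *ᵥ (fun i => (y i : ℂ)) = fun i => ((M *ᵥ y) i : ℂ) := by
    intro M y
    funext i
    exact (RingHom.map_mulVec Complex.ofRealHom M y i).symm
  constructor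
  · intro h
    -- use λ = 1
    have h1 := h 1
    have hdet : (E - J + R).det = 0 := by
      have : ((E - J + R).map (fun r => (r : ℂ))).det = 0 := by
        have e : (E - J + R).map (fun r => (r : ℂ))
            = (1 : ℂ) • E.map (fun r => (r : ℂ)) - J.map (fun r => (r : ℂ))
              + R.map (fun r => (r : ℂ)) := by
          rw [one_smul]
          ext i j
          simp [Matrix.map_apply]
        rw [e]; exact h1
      have h2 : Complex.ofRealHom (E - J + R).det = 0 :=
        (RingHom.map_det Complex.ofRealHom (E - J + R)).trans this
      rw [Complex.ofRealHom_eq_coe, Complex.ofReal_eq_zero] at h2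
      exact h2
    obtain ⟨v, hv, hMv⟩ := (Matrix.exists_mulVec_eq_zero_iff).mpr hdet
    -- skew part vanishes in quadratic form
    have hskew : v ⬝ᵥ (J *ᵥ v) = 0 := by
      have h1 : v ⬝ᵥ (J *ᵥ v) = (v ᵥ* J) ⬝ᵥ v := dotProduct_mulVec v J v
      have h2 : v ᵥ* J = Jᵀ *ᵥ v := (Matrix.mulVec_transpose J v).symm
      rw [h2, hJ, Matrix.neg_mulVec, neg_dotProduct] at h1
      linarith [dotProduct_comm v (J *ᵥ v)]
    have hsum : v ⬝ᵥ (E *ᵥ v) + v ⬝ᵥ (R *ᵥ v) = 0 := by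
      have : v ⬝ᵥ ((E - J + R) *ᵥ v) = 0 := by rw [hMv, dotProduct_zero]
      rw [Matrix.add_mulVec, Matrix.sub_mulVec, dotProduct_add, dotProduct_sub, hskew] at this
      linarith
    have hEnn : 0 ≤ v ⬝ᵥ (E *ᵥ v) := by simpa using hE.dotProduct_mulVec_nonneg v
    have hRnn : 0 ≤ v ⬝ᵥ (R *ᵥ v) := by simpa using hR.dotProduct_mulVec_nonneg v
    have hEq : v ⬝ᵥ (E *ᵥ v) = 0 := by linarith
    have hRq : v ⬝ᵥ (R *ᵥ v) = 0 := by linarith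
    have hEv : E *ᵥ v = 0 := (hE.dotProduct_mulVec_zero_iff v).mp (by simpa using hEq)
    have hRv : R *ᵥ v = 0 := (hR.dotProduct_mulVec_zero_iff v).mp (by simpa using hRq)
    have hJv : J *ᵥ v = 0 := by
      have : (E - J + R) *ᵥ v = E *ᵥ v - J *ᵥ v + R *ᵥ v := by
        rw [Matrix.add_mulVec, Matrix.sub_mulVec]
      rw [hMv, hEv, hRv] at this
      have := this.symm
      simpa [sub_eq_zero] using this
    exact ⟨v, hv, hJv, hEv, hRv⟩
  · rintro ⟨x, hx, hJx, hEx, hRx⟩ lam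
    rw [← Matrix.exists_mulVec_eq_zero_iff]
    refine ⟨fun i => (x i : ℂ), ?_, ?_⟩
    · intro hc
      apply hx
      funext i
      have h3 := congrFun hc i
      simpa using h3
    · rw [Matrix.add_mulVec, Matrix.sub_mulVec, Matrix.smul_mulVec,
        hmap E x, hmap J x, hmap R x, hEx, hJx, hRx]
      funext i
      simp
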